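/- Let h : X → ℝ be a metric functional on a real Banach space X (a pointwise limit of functions h_y(x) = ‖x - y‖ - ‖y‖). Then there exists a continuous linear functional f on X with ‖f‖ ≤ 1 and f(x) ≤ h(x) for all x ∈ X. -/

import Mathlib

open Filter Topology Pointwise

theorem linear_functional_below_metric_functional {X : Type*}
    [NormedAddCommGroup X] [NormedSpace ℝ X] [CompleteSpace X]
    {ι : Type*} (l : Filter ι) [l.NeBot] (y : ι → X) (h : X → ℝ)
    (hlim : ∀ x : X, Tendsto (fun i => ‖x - y i‖ - ‖y i‖) l (𝓝 (h x))) :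
    ∃ f : X →L[ℝ] ℝ, ‖f‖ ≤ 1 ∧ ∀ x : X, f x ≤ h x := by
  -- basic facts about h
  have h0 : h 0 = 0 := by
    have : Tendsto (fun _ : ι => (0 : ℝ)) l (𝓝 (h 0)) := by
      simpa using hlim 0
    exact tendsto_nhds_unique this tendsto_const_nhds
  have hub : ∀ x : X, h x ≤ ‖x‖ := by
    intro x
    refine le_of_tendsto (hlim x) (Eventually.of_forall fun i => ?_)
    have := norm_sub_le x (y i)
    linarith
  -- convexity of h
  have hconv : ∀ (a b : X) (s t : ℝ), 0 ≤ s → 0 ≤ t → s + t = 1 →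
      h (s • a + t • b) ≤ s * h a + t * h b := by
    intro a b s t hs ht hst
    refine le_of_tendsto_of_tendsto' (hlim _)
      (((hlim a).const_mul s).add ((hlim b).const_mul t)) fun i => ?_
    have key : s • a + t • b - y i = s • (a - y i) + t • (b - y i) := by
      have e : s • (a - y i) + t • (b - y i) = s • a + t • b - (s + t) • y i := by
        module
      rw [e, hst, one_smul]
    have h1 : ‖s • a + t • b - y i‖ ≤ s * ‖a - y i‖ + t * ‖b - y i‖ := by
      rw [key]
      calc ‖s • (a - y i) + t • (b - y i)‖ ≤ ‖s • (a - y i)‖ + ‖t • (b - y i)‖ :=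
            norm_add_le _ _
        _ = s * ‖a - y i‖ + t * ‖b - y i‖ := by
            rw [norm_smul, norm_smul, Real.norm_eq_abs, Real.norm_eq_abs,
              abs_of_nonneg hs, abs_of_nonneg ht]
    nlinarith [norm_nonneg (y i)]
  -- the sublinear minorant
  set N : X → ℝ := fun x => sInf ((fun t => h (t • x) / t) '' Set.Ioi 0) with hN
  have hbdd : ∀ x : X, ∀ b ∈ (fun t => h (t • x) / t) '' Set.Ioi 0, -‖x‖ ≤ b := by
    rintro x b ⟨t, ht, rfl⟩
    rw [Set.mem_Ioi] at ht
    have h1 : -‖t • x‖ ≤ h (t • x) := by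
      refine ge_of_tendsto (hlim (t • x)) (Eventually.of_forall fun i => ?_)
      have h2 : ‖y i‖ ≤ ‖t • x - y i‖ + ‖t • x‖ := by
        have h4 := norm_add_le (y i - t • x) (t • x)
        rw [sub_add_cancel, norm_sub_rev] at h4
        exact h4
      linarith
    have h3 : ‖t • x‖ = t * ‖x‖ := by
      rw [norm_smul, Real.norm_eq_abs, abs_of_pos ht]
    show -‖x‖ ≤ h (t • x) / t
    rw [le_div_iff₀ ht]
    nlinarith
  have hne : ∀ x : X, ((fun t => h (t • x) / t) '' Set.Ioi 0).Nonempty :=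
    fun x => ⟨h x, 1, Set.mem_Ioi.2 one_pos, by simp⟩
  have hNle : ∀ x : X, N x ≤ h x := by
    intro x
    have : h ((1 : ℝ) • x) / 1 ∈ (fun t => h (t • x) / t) '' Set.Ioi 0 :=
      ⟨1, Set.mem_Ioi.2 one_pos, rfl⟩
    simpa using csInf_le ⟨-‖x‖, hbdd x⟩ this
  -- monotonicity of t ↦ h (t • x) / t
  have hmono : ∀ (x : X) (t u : ℝ), 0 < t → t ≤ u → h (t • x) / t ≤ h (u • x) / u := by
    intro x t u ht htu
    have hu : 0 < u := lt_of_lt_of_le ht htu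
    have hr : 0 ≤ t / u := div_nonneg ht.le hu.le
    have hr1 : t / u ≤ 1 := div_le_one_of_le₀ htu hu.le
    have key : h (t • x) ≤ (t / u) * h (u • x) := by
      have := hconv (u • x) 0 (t / u) (1 - t / u) hr (by linarith) (by ring)
      have e : (t / u) • (u • x) + (1 - t / u) • (0 : X) = t • x := by
        rw [smul_zero, add_zero, smul_smul, div_mul_cancel₀ _ hu.ne']
      rw [e, h0] at this
      linarith
    rw [div_le_div_iff₀ ht hu]
    calc h (t • x) * u ≤ ((t / u) * h (u • x)) * u := by nlinarith
      _ = h (u • x) * t := by field_simp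
  -- N is positively homogeneous
  have N_hom : ∀ c : ℝ, 0 < c → ∀ x : X, N (c • x) = c * N x := by
    intro c hc x
    have hset : (fun t => h (t • (c • x)) / t) '' Set.Ioi 0
        = (fun b => c * b) '' ((fun t => h (t • x) / t) '' Set.Ioi 0) := by
      ext b
      constructor
      · rintro ⟨t, ht, rfl⟩
        rw [Set.mem_Ioi] at ht
        refine ⟨h ((t * c) • x) / (t * c), ⟨t * c, Set.mem_Ioi.2 (mul_pos ht hc), rfl⟩, ?_⟩
        show c * (h ((t * c) • x) / (t * c)) = h (t • c • x) / t
        rw [smul_smul]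
        field_simp
      · rintro ⟨b, ⟨t, ht, rfl⟩, rfl⟩
        rw [Set.mem_Ioi] at ht
        refine ⟨t / c, Set.mem_Ioi.2 (div_pos ht hc), ?_⟩
        show h ((t / c) • c • x) / (t / c) = c * (h (t • x) / t)
        rw [smul_smul, div_mul_cancel₀ _ hc.ne']
        field_simp
    have := Real.sInf_smul_of_nonneg hc.le ((fun t => h (t • x) / t) '' Set.Ioi 0)
    rw [hN]
    simp only
    rw [hset]
    have e2 : (fun b => c * b) '' ((fun t => h (t • x) / t) '' Set.Ioi 0)
        = c • ((fun t => h (t • x) / t) '' Set.Ioi 0) := by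
      ext b
      simp [Set.mem_smul_set, smul_eq_mul]
    rw [e2, this]
    simp [smul_eq_mul]
  -- N is subadditive
  have N_add : ∀ x z : X, N (x + z) ≤ N x + N z := by
    intro x z
    have key : ∀ t > (0:ℝ), ∀ u > (0:ℝ),
        N (x + z) ≤ h (t • x) / t + h (u • z) / u := by
      intro t ht u hu
      set s := min t u / 2 with hs
      have hspos : 0 < s := by positivity
      have h2s : (0:ℝ) < 2 * s := by positivity
      have h2st : 2 * s ≤ t := by
        have := min_le_left t u; rw [hs]; linarith
      have h2su : 2 * s ≤ u := by
        have := min_le_right t u; rw [hs]; linarith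
      have hmid : h (s • (x + z)) ≤ (1/2) * h ((2*s) • x) + (1/2) * h ((2*s) • z) := by
        have := hconv ((2*s) • x) ((2*s) • z) (1/2) (1/2) (by norm_num) (by norm_num)
          (by norm_num)
        have e : (1/2 : ℝ) • ((2*s) • x) + (1/2 : ℝ) • ((2*s) • z) = s • (x + z) := by
          rw [smul_smul, smul_smul, smul_add, show (1/2 : ℝ) * (2 * s) = s by ring]
        rwa [e] at this
      have step : h (s • (x + z)) / s ≤ h ((2*s) • x) / (2*s) + h ((2*s) • z) / (2*s) := by
        rw [← add_div, div_le_div_iff₀ hspos h2s]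
        nlinarith [hmid, hspos]
      have m1 : h ((2*s) • x) / (2*s) ≤ h (t • x) / t := hmono x _ t h2s h2st
      have m2 : h ((2*s) • z) / (2*s) ≤ h (u • z) / u := hmono z _ u h2s h2su
      have inS : h (s • (x + z)) / s ∈ (fun t => h (t • (x + z)) / t) '' Set.Ioi 0 :=
        ⟨s, Set.mem_Ioi.2 hspos, rfl⟩
      have := csInf_le ⟨-‖x + z‖, hbdd (x + z)⟩ inS
      calc N (x + z) ≤ h (s • (x + z)) / s := this
        _ ≤ h ((2*s) • x) / (2*s) + h ((2*s) • z) / (2*s) := step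
        _ ≤ h (t • x) / t + h (u • z) / u := add_le_add m1 m2
    have step1 : ∀ t > (0:ℝ), N (x + z) - h (t • x) / t ≤ N z := by
      intro t ht
      refine le_csInf (hne z) ?_
      rintro b ⟨u, hu, rfl⟩
      rw [Set.mem_Ioi] at hu
      have := key t ht u hu
      linarith
    have step2 : N (x + z) - N z ≤ N x := by
      refine le_csInf (hne x) ?_
      rintro b ⟨t, ht, rfl⟩
      rw [Set.mem_Ioi] at ht
      have := step1 t ht
      linarith
    linarith
  -- apply Hahn-Banach
  have hzero : ∀ x : ((0 : X →ₗ[ℝ] ℝ).toPMap ⊥).domain,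
      (0 : X →ₗ[ℝ] ℝ).toPMap ⊥ x ≤ N x := by
    rintro ⟨x, hx⟩
    have hx0 : x = 0 := by simpa using hx
    subst hx0
    have : (0:ℝ) ≤ N 0 := by
      refine le_csInf (hne 0) ?_
      rintro b ⟨t, ht, rfl⟩
      simp [h0]
    simpa using this
  obtain ⟨g, -, hg⟩ := exists_extension_of_le_sublinear ((0 : X →ₗ[ℝ] ℝ).toPMap ⊥) N
    N_hom N_add hzero
  have gbound : ∀ x : X, |g x| ≤ ‖x‖ := by
    intro x
    refine abs_le.2 ⟨?_, (hg x).trans ((hNle x).trans (hub x))⟩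
    have := (hg (-x)).trans ((hNle (-x)).trans (hub (-x)))
    rw [map_neg, norm_neg] at this
    linarith
  refine ⟨g.mkContinuous 1 (fun x => by simpa using gbound x), ?_, fun x => ?_⟩
  · exact g.mkContinuous_norm_le zero_le_one _
  · exact (hg x).trans (hNle x)
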